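/- For every μ > 0 there exists a smooth compactly supported function v : ℝ² → ℝ with ∫_{ℝ²} (v + Δv)² dx < μ ∫_{ℝ²} v² dx. Consequently, for any β ∈ ℝ there is ε₀ > 0 such that E[εv] < 0 = E[0] for all 0 < ε < ε₀; in particular the uniform state u = 0 is not a local minimizer of the free energy E along the ray through v. -/

import Mathlib

open MeasureTheory

/-- The Laplacian of a function on `ℝ²` (Euclidean plane). -/
noncomputable def laplacian (f : EuclideanSpace ℝ (Fin 2) → ℝ)
    (x : EuclideanSpace ℝ (Fin 2)) : ℝ :=
  ∑ i : Fin 2,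
    fderiv ℝ (fun y => fderiv ℝ f y (EuclideanSpace.single i (1 : ℝ))) x
      (EuclideanSpace.single i (1 : ℝ))

/-- The free energy functional of the auxin model. -/
noncomputable def freeEnergy (μ β : ℝ) (u : EuclideanSpace ℝ (Fin 2) → ℝ) : ℝ :=
  ∫ x, (-(μ / 2) * u x ^ 2 + (1 / 2) * (u x + laplacian u x) ^ 2
    + (β / 3) * u x * ‖gradient u x‖ ^ 2 + (1 / 4) * u x ^ 4)

local notation "E2" => EuclideanSpace ℝ (Fin 2)

lemma integral_prod_e2 (f g : ℝ → ℝ) :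
    ∫ x : E2, f (x 0) * g (x 1) = (∫ t, f t) * ∫ t, g t := by
  have h1 : ∫ x : E2, f (x 0) * g (x 1)
      = ∫ y : Fin 2 → ℝ, f (y 0) * g (y 1) := by
    rw [← (EuclideanSpace.volume_preserving_symm_measurableEquiv_toLp (ι := Fin 2)).integral_comp'
      (f := (MeasurableEquiv.toLp 2 (Fin 2 → ℝ)).symm) (fun y => f (y 0) * g (y 1))]
    rfl
  have h2 : ∫ y : Fin 2 → ℝ, f (y 0) * g (y 1)
      = ∫ p : ℝ × ℝ, f p.1 * g p.2 := by
    rw [← (volume_preserving_piFinTwo (fun _ : Fin 2 => ℝ)).integral_comp'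
      (fun p => f p.1 * g p.2)]
    rfl
  rw [h1, h2]
  rw [show (volume : Measure (ℝ × ℝ)) = (volume : Measure ℝ).prod volume from
    Measure.volume_eq_prod ℝ ℝ]
  exact integral_prod_mul f g

lemma hasFDerivAt_prod (f₁ f₂ f₁' f₂' : ℝ → ℝ)
    (h₁ : ∀ t, HasDerivAt f₁ (f₁' t) t) (h₂ : ∀ t, HasDerivAt f₂ (f₂' t) t)
    (x : E2) :
    HasFDerivAt (fun y : E2 => f₁ (y 0) * f₂ (y 1))
      ((f₁' (x 0) * f₂ (x 1)) • (EuclideanSpace.proj 0 : E2 →L[ℝ] ℝ)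
        + (f₁ (x 0) * f₂' (x 1)) • (EuclideanSpace.proj 1 : E2 →L[ℝ] ℝ)) x := by
  have hx0 : HasFDerivAt (fun y : E2 => y 0)
      (EuclideanSpace.proj (0 : Fin 2) : E2 →L[ℝ] ℝ) x :=
    (EuclideanSpace.proj (0 : Fin 2) : E2 →L[ℝ] ℝ).hasFDerivAt
  have hx1 : HasFDerivAt (fun y : E2 => y 1)
      (EuclideanSpace.proj (1 : Fin 2) : E2 →L[ℝ] ℝ) x :=
    (EuclideanSpace.proj (1 : Fin 2) : E2 →L[ℝ] ℝ).hasFDerivAt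
  have hp0 : HasFDerivAt (fun y : E2 => f₁ (y 0))
      ((f₁' (x 0)) • (EuclideanSpace.proj 0 : E2 →L[ℝ] ℝ)) x :=
    (h₁ (x 0)).comp_hasFDerivAt x hx0
  have hp1 : HasFDerivAt (fun y : E2 => f₂ (y 1))
      ((f₂' (x 1)) • (EuclideanSpace.proj 1 : E2 →L[ℝ] ℝ)) x :=
    (h₂ (x 1)).comp_hasFDerivAt x hx1
  have := hp0.mul hp1
  refine HasFDerivAt.congr_fderiv this ?_
  ext y
  simp [smul_smul]
  ring

lemma fderiv_prod_single (f₁ f₂ f₁' f₂' : ℝ → ℝ)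
    (h₁ : ∀ t, HasDerivAt f₁ (f₁' t) t) (h₂ : ∀ t, HasDerivAt f₂ (f₂' t) t)
    (x : E2) (i : Fin 2) :
    fderiv ℝ (fun y : E2 => f₁ (y 0) * f₂ (y 1)) x (EuclideanSpace.single i (1:ℝ))
      = if i = 0 then f₁' (x 0) * f₂ (x 1) else f₁ (x 0) * f₂' (x 1) := by
  rw [(hasFDerivAt_prod f₁ f₂ f₁' f₂' h₁ h₂ x).fderiv]
  fin_cases i <;>
    simp [EuclideanSpace.single_apply]

lemma laplacian_prod (f₁ f₂ f₁' f₂' f₁'' f₂'' : ℝ → ℝ)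
    (h₁ : ∀ t, HasDerivAt f₁ (f₁' t) t) (h₂ : ∀ t, HasDerivAt f₂ (f₂' t) t)
    (h₁' : ∀ t, HasDerivAt f₁' (f₁'' t) t) (h₂' : ∀ t, HasDerivAt f₂' (f₂'' t) t)
    (x : E2) :
    laplacian (fun y : E2 => f₁ (y 0) * f₂ (y 1)) x
      = f₁'' (x 0) * f₂ (x 1) + f₁ (x 0) * f₂'' (x 1) := by
  rw [laplacian, Fin.sum_univ_two]
  have e0 : (fun y : E2 => fderiv ℝ (fun y : E2 => f₁ (y 0) * f₂ (y 1)) y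
      (EuclideanSpace.single 0 (1 : ℝ))) = fun y : E2 => f₁' (y 0) * f₂ (y 1) := by
    funext y
    rw [fderiv_prod_single f₁ f₂ f₁' f₂' h₁ h₂ y 0]
    simp
  have e1 : (fun y : E2 => fderiv ℝ (fun y : E2 => f₁ (y 0) * f₂ (y 1)) y
      (EuclideanSpace.single 1 (1 : ℝ))) = fun y : E2 => f₁ (y 0) * f₂' (y 1) := by
    funext y
    rw [fderiv_prod_single f₁ f₂ f₁' f₂' h₁ h₂ y 1]
    simp
  rw [e0, e1, fderiv_prod_single f₁' f₂ f₁'' f₂' h₁' h₂ x 0,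
    fderiv_prod_single f₁ f₂' f₁' f₂'' h₁ h₂' x 1]
  simp

lemma int_sq_le (F : ℝ → ℝ) (hF : Continuous F) (c B : ℝ) (hc : 0 < c)
    (hvan : ∀ t, c ≤ |t| → F t = 0) (hbd : ∀ t, |F t| ≤ B) :
    ∫ t, (F t)^2 ≤ 2 * c * B^2 := by
  have h1 : ∫ t, (F t)^2 = ∫ t in Set.Icc (-c) c, (F t)^2 := by
    refine (setIntegral_eq_integral_of_forall_compl_eq_zero fun t ht => ?_).symm
    have : c ≤ |t| := by
      simp only [Set.mem_Icc, not_and_or, not_le] at ht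
      rcases ht with h | h <;> [exact le_abs.2 (Or.inr (by linarith)); exact le_abs.2 (Or.inl h.le)]
    rw [hvan t this]; ring
  rw [h1]
  have hle : ‖∫ t in Set.Icc (-c) c, (F t)^2‖ ≤ B^2 * (volume (Set.Icc (-c) c)).toReal := by
    refine norm_setIntegral_le_of_norm_le_const ?_ ?_
    · rw [Real.volume_Icc]; exact ENNReal.ofReal_lt_top
    · intro t _
      rw [Real.norm_eq_abs, abs_of_nonneg (sq_nonneg _)]
      calc (F t)^2 = |F t|^2 := (sq_abs _).symm
        _ ≤ B^2 := by apply pow_le_pow_left₀ (abs_nonneg _) (hbd t)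
  have hvol : (volume (Set.Icc (-c) c)).toReal = 2 * c := by
    rw [Real.volume_Icc, ENNReal.toReal_ofReal (by linarith)]; ring
  calc ∫ t in Set.Icc (-c) c, (F t)^2 ≤ ‖∫ t in Set.Icc (-c) c, (F t)^2‖ := le_abs_self _
    _ ≤ B^2 * (2*c) := by rw [← hvol]; exact hle
    _ = 2 * c * B^2 := by ring

lemma integrable_1d (F : ℝ → ℝ) (hF : Continuous F) (c : ℝ)
    (hvan : ∀ t, c ≤ |t| → F t = 0) : Integrable F := by
  apply hF.integrable_of_hasCompactSupport
  apply HasCompactSupport.intro (isCompact_Icc (a := -|c|-1) (b := |c|+1))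
  intro t ht
  apply hvan
  simp only [Set.mem_Icc, not_and_or, not_le] at ht
  rcases ht with h | h
  · calc c ≤ |c| := le_abs_self c
      _ ≤ -t := by linarith
      _ ≤ |t| := neg_le_abs t
  · calc c ≤ |c| := le_abs_self c
      _ ≤ t := by linarith
      _ ≤ |t| := le_abs_self t

lemma hcs_e2 (F : E2 → ℝ) (c : ℝ) (hc : 0 ≤ c)
    (hvan : ∀ x : E2, c ≤ |x 0| ∨ c ≤ |x 1| → F x = 0) : HasCompactSupport F := by
  apply HasCompactSupport.intro (isCompact_closedBall (0:E2) (2*c+1))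
  intro x hx
  apply hvan
  by_contra hcon
  push_neg at hcon
  apply hx
  rw [Metric.mem_closedBall, dist_zero_right, EuclideanSpace.norm_eq, Fin.sum_univ_two]
  have hb : ‖x 0‖^2 + ‖x 1‖^2 ≤ (2*c+1)^2 := by
    rw [Real.norm_eq_abs, Real.norm_eq_abs]
    nlinarith [abs_nonneg (x 0), abs_nonneg (x 1), hcon.1, hcon.2]
  calc Real.sqrt (‖x 0‖^2 + ‖x 1‖^2) ≤ Real.sqrt ((2*c+1)^2) := Real.sqrt_le_sqrt hb
    _ = 2*c+1 := Real.sqrt_sq (by linarith)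
set_option maxHeartbeats 2000000 in
/-- For every `μ > 0` there is a smooth compactly supported `v` with
`∫ (v + Δv)² < μ ∫ v²`; consequently, for any `β` there is `ε₀ > 0` with
`E[εv] < 0 = E[0]` for all `0 < ε < ε₀`, so the uniform state `u = 0` is not a
local minimizer of the free energy along the ray through `v`. -/
theorem zero_not_local_min (μ : ℝ) (hμ : 0 < μ) :
    ∃ v : EuclideanSpace ℝ (Fin 2) → ℝ,
      ContDiff ℝ (⊤ : ℕ∞) v ∧ HasCompactSupport v ∧
      (∫ x, (v x + laplacian v x) ^ 2) < μ * ∫ x, v x ^ 2 ∧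
      ∀ β : ℝ, ∃ ε₀ > (0 : ℝ), ∀ ε : ℝ, 0 < ε → ε < ε₀ →
        freeEnergy μ β (ε • v) < 0 ∧ freeEnergy μ β 0 = 0 := by
  classical
  -- the bump function
  set B : ContDiffBump (0:ℝ) := ⟨1, 2, one_pos, one_lt_two⟩ with hBdef
  obtain ⟨φ, hφdef⟩ : ∃ φ : ℝ → ℝ, φ = ⇑B := ⟨_, rfl⟩
  obtain ⟨φ₁, hφ₁def⟩ : ∃ φ₁ : ℝ → ℝ, φ₁ = deriv φ := ⟨_, rfl⟩
  obtain ⟨φ₂, hφ₂def⟩ : ∃ φ₂ : ℝ → ℝ, φ₂ = deriv φ₁ := ⟨_, rfl⟩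
  have hφsm : ContDiff ℝ (⊤:ℕ∞) φ := by rw [hφdef]; exact B.contDiff
  have hφ₁sm : ContDiff ℝ (⊤:ℕ∞) φ₁ := by
    rw [hφ₁def]; exact (contDiff_infty_iff_deriv.mp hφsm).2
  have hφ₂cont : Continuous φ₂ := by
    rw [hφ₂def]; exact ((contDiff_infty_iff_deriv.mp hφ₁sm).2).continuous
  have hdφ : ∀ t, HasDerivAt φ (φ₁ t) t := fun t => by
    rw [hφ₁def]; exact ((hφsm.differentiable (by simp)) t).hasDerivAt
  have hdφ₁ : ∀ t, HasDerivAt φ₁ (φ₂ t) t := fun t => by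
    rw [hφ₂def]; exact ((hφ₁sm.differentiable (by simp)) t).hasDerivAt
  have hφ_one : ∀ t : ℝ, |t| ≤ 1 → φ t = 1 := fun t ht => by
    rw [hφdef]
    exact B.one_of_mem_closedBall (by simpa [Real.dist_eq] using ht)
  have hφ_zero : ∀ t : ℝ, 2 ≤ |t| → φ t = 0 := fun t ht => by
    rw [hφdef]
    exact B.zero_of_le_dist (by simpa [Real.dist_eq] using ht)
  have hφ_le : ∀ t : ℝ, |φ t| ≤ 1 := fun t => by
    rw [hφdef]
    exact abs_le.2 ⟨by linarith [B.nonneg (x := t)], B.le_one⟩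
  have htsupp : tsupport φ ⊆ Set.Icc (-2:ℝ) 2 := by
    rw [hφdef, B.tsupport_eq]
    intro t ht
    simp only [Metric.mem_closedBall, Real.dist_eq, sub_zero] at ht
    exact Set.mem_Icc.2 (abs_le.mp ht)
  have hφ₁_zero : ∀ t : ℝ, 3 ≤ |t| → φ₁ t = 0 := by
    intro t ht
    rw [hφ₁def]
    by_contra hne
    have : t ∈ tsupport φ := support_deriv_subset (by simpa using hne)
    have := htsupp this
    simp only [Set.mem_Icc] at this
    have habs : |t| ≤ 2 := abs_le.2 this
    linarith
  have hφ₁supp : tsupport φ₁ ⊆ Set.Icc (-3:ℝ) 3 := by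
    have : Function.support φ₁ ⊆ Set.Icc (-3:ℝ) 3 := by
      intro t ht
      by_contra hmem
      simp only [Set.mem_Icc, not_and_or, not_le] at hmem
      have h3 : 3 ≤ |t| := by
        rcases hmem with hl | hl
        · exact le_abs.2 (Or.inr (by linarith))
        · exact le_abs.2 (Or.inl hl.le)
      exact ht (hφ₁_zero t h3)
    exact closure_minimal this isClosed_Icc
  have hφ₂_zero : ∀ t : ℝ, 4 ≤ |t| → φ₂ t = 0 := by
    intro t ht
    rw [hφ₂def]
    by_contra hne
    have hmem : t ∈ tsupport φ₁ := support_deriv_subset (by simpa using hne)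
    have := hφ₁supp hmem
    simp only [Set.mem_Icc] at this
    have habs : |t| ≤ 3 := abs_le.2 this
    linarith
  -- bounds on derivatives
  have hφ₁cs : HasCompactSupport φ₁ :=
    HasCompactSupport.intro (isCompact_Icc (a := (-3:ℝ)) (b := 3)) fun t ht => by
      apply hφ₁_zero
      simp only [Set.mem_Icc, not_and_or, not_le] at ht
      rcases ht with hl | hl
      · exact le_abs.2 (Or.inr (by linarith))
      · exact le_abs.2 (Or.inl hl.le)
  have hφ₂cs : HasCompactSupport φ₂ :=
    HasCompactSupport.intro (isCompact_Icc (a := (-4:ℝ)) (b := 4)) fun t ht => by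
      apply hφ₂_zero
      simp only [Set.mem_Icc, not_and_or, not_le] at ht
      rcases ht with hl | hl
      · exact le_abs.2 (Or.inr (by linarith))
      · exact le_abs.2 (Or.inl hl.le)
  obtain ⟨C₁, hC₁⟩ := hφ₁cs.exists_bound_of_continuous hφ₁sm.continuous
  obtain ⟨C₂, hC₂⟩ := hφ₂cs.exists_bound_of_continuous hφ₂cont
  obtain ⟨C, hCdef⟩ : ∃ C : ℝ, C = max 1 (max C₁ C₂) := ⟨_, rfl⟩
  have hC1 : (1:ℝ) ≤ C := hCdef ▸ le_max_left _ _
  have hCpos : (0:ℝ) < C := lt_of_lt_of_le one_pos hC1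
  have hCφ₁ : ∀ t, |φ₁ t| ≤ C := fun t => by
    rw [hCdef]
    calc |φ₁ t| = ‖φ₁ t‖ := (Real.norm_eq_abs _).symm
      _ ≤ C₁ := hC₁ t
      _ ≤ max C₁ C₂ := le_max_left _ _
      _ ≤ _ := le_max_right _ _
  have hCφ₂ : ∀ t, |φ₂ t| ≤ C := fun t => by
    rw [hCdef]
    calc |φ₂ t| = ‖φ₂ t‖ := (Real.norm_eq_abs _).symm
      _ ≤ C₂ := hC₂ t
      _ ≤ max C₁ C₂ := le_max_right _ _
      _ ≤ _ := le_max_right _ _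
  -- the length scale
  obtain ⟨R, hRdef⟩ : ∃ R : ℝ, R = 2 + 432 * C^2 / μ := ⟨_, rfl⟩
  have hR2 : 2 ≤ R := by
    rw [hRdef]
    have : 0 ≤ 432 * C^2 / μ := by positivity
    linarith
  have hRpos : 0 < R := by linarith
  have hμR : 432 * C^2 ≤ μ * R := by
    have : μ * R = 2*μ + 432*C^2 := by rw [hRdef]; field_simp
    linarith
  -- 1-D building blocks
  obtain ⟨g, hgdef⟩ : ∃ g : ℝ → ℝ, g = fun t => φ (t/R) * Real.cos t := ⟨_, rfl⟩
  obtain ⟨h, hhdef⟩ : ∃ h : ℝ → ℝ, h = fun t => φ (t/R) := ⟨_, rfl⟩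
  obtain ⟨g1, hg1def⟩ : ∃ g1 : ℝ → ℝ,
    g1 = fun t => φ₁ (t/R) * (1/R) * Real.cos t + φ (t/R) * (-Real.sin t) := ⟨_, rfl⟩
  obtain ⟨h1, hh1def⟩ : ∃ h1 : ℝ → ℝ, h1 = fun t => φ₁ (t/R) * (1/R) := ⟨_, rfl⟩
  obtain ⟨g2, hg2def⟩ : ∃ g2 : ℝ → ℝ,
    g2 = fun t => (φ₂ (t/R) * (1/R) * (1/R) * Real.cos t + φ₁ (t/R) * (1/R) * (-Real.sin t))
      + (φ₁ (t/R) * (1/R) * (-Real.sin t) + φ (t/R) * (-Real.cos t)) := ⟨_, rfl⟩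
  obtain ⟨h2, hh2def⟩ : ∃ h2 : ℝ → ℝ, h2 = fun t => φ₂ (t/R) * (1/R) * (1/R) := ⟨_, rfl⟩
  have hψd : ∀ t : ℝ, HasDerivAt (fun s => φ (s/R)) (φ₁ (t/R) * (1/R)) t := fun t =>
    (hdφ (t/R)).comp t ((hasDerivAt_id t).div_const R)
  have hψ₁d : ∀ t : ℝ, HasDerivAt (fun s => φ₁ (s/R)) (φ₂ (t/R) * (1/R)) t := fun t =>
    (hdφ₁ (t/R)).comp t ((hasDerivAt_id t).div_const R)
  have hdg : ∀ t, HasDerivAt g (g1 t) t := fun t => by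
    rw [hgdef, hg1def]
    exact (hψd t).mul (Real.hasDerivAt_cos t)
  have hdh : ∀ t, HasDerivAt h (h1 t) t := fun t => by
    rw [hhdef, hh1def]; exact hψd t
  have hdh1 : ∀ t, HasDerivAt h1 (h2 t) t := fun t => by
    rw [hh1def, hh2def]
    exact (hψ₁d t).mul_const (1/R)
  have hdg1 : ∀ t, HasDerivAt g1 (g2 t) t := fun t => by
    rw [hg1def, hg2def]
    exact ((hψ₁d t).mul_const (1/R) |>.mul (Real.hasDerivAt_cos t)).add
      ((hψd t).mul ((Real.hasDerivAt_sin t).neg))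
  -- smoothness and continuity
  have hgsm : ContDiff ℝ (⊤:ℕ∞) g := by
    rw [hgdef]
    exact (hφsm.comp (contDiff_id.div_const R)).mul Real.contDiff_cos
  have hhsm : ContDiff ℝ (⊤:ℕ∞) h := by
    rw [hhdef]
    exact hφsm.comp (contDiff_id.div_const R)
  have hg1cont : Continuous g1 := by
    rw [hg1def]
    have c1 : Continuous fun t : ℝ => φ₁ (t/R) :=
      hφ₁sm.continuous.comp (continuous_id.div_const R)
    have c0 : Continuous fun t : ℝ => φ (t/R) :=
      hφsm.continuous.comp (continuous_id.div_const R)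
    exact ((c1.mul continuous_const).mul Real.continuous_cos).add
      (c0.mul Real.continuous_sin.neg)
  have hg2cont : Continuous g2 := by
    rw [hg2def]
    have c2 : Continuous fun t : ℝ => φ₂ (t/R) :=
      hφ₂cont.comp (continuous_id.div_const R)
    have c1 : Continuous fun t : ℝ => φ₁ (t/R) :=
      hφ₁sm.continuous.comp (continuous_id.div_const R)
    have c0 : Continuous fun t : ℝ => φ (t/R) :=
      hφsm.continuous.comp (continuous_id.div_const R)
    exact ((((c2.mul continuous_const).mul continuous_const).mul Real.continuous_cos).add
      ((c1.mul continuous_const).mul Real.continuous_sin.neg)).add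
      (((c1.mul continuous_const).mul Real.continuous_sin.neg).add
        (c0.mul Real.continuous_cos.neg))
  have hh1cont : Continuous h1 := by
    rw [hh1def]
    exact (hφ₁sm.continuous.comp (continuous_id.div_const R)).mul continuous_const
  have hh2cont : Continuous h2 := by
    rw [hh2def]
    exact ((hφ₂cont.comp (continuous_id.div_const R)).mul continuous_const).mul continuous_const
  -- vanishing
  have habs2 : ∀ t : ℝ, 2*R ≤ |t| → (2:ℝ) ≤ |t/R| := fun t ht => by
    rw [abs_div, abs_of_pos hRpos, le_div_iff₀ hRpos]; linarith
  have habs4 : ∀ t : ℝ, 4*R ≤ |t| → (4:ℝ) ≤ |t/R| := fun t ht => by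
    rw [abs_div, abs_of_pos hRpos, le_div_iff₀ hRpos]; linarith
  have hg0 : ∀ t : ℝ, 2*R ≤ |t| → g t = 0 := fun t ht => by
    rw [hgdef]; simp only
    rw [hφ_zero _ (habs2 t ht)]; ring
  have hh0 : ∀ t : ℝ, 2*R ≤ |t| → h t = 0 := fun t ht => by
    rw [hhdef]; simp only
    exact hφ_zero _ (habs2 t ht)
  have hg10 : ∀ t : ℝ, 4*R ≤ |t| → g1 t = 0 := fun t ht => by
    have h4 := habs4 t ht
    rw [hg1def]; simp only
    rw [hφ_zero _ (by linarith), hφ₁_zero _ (by linarith)]; ring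
  have hh10 : ∀ t : ℝ, 4*R ≤ |t| → h1 t = 0 := fun t ht => by
    have h4 := habs4 t ht
    rw [hh1def]; simp only
    rw [hφ₁_zero _ (by linarith)]; ring
  have hh20 : ∀ t : ℝ, 4*R ≤ |t| → h2 t = 0 := fun t ht => by
    have h4 := habs4 t ht
    rw [hh2def]; simp only
    rw [hφ₂_zero _ (by linarith)]; ring
  have hq0 : ∀ t : ℝ, 4*R ≤ |t| → g2 t + g t = 0 := fun t ht => by
    have h4 := habs4 t ht
    rw [hg2def, hgdef]; simp only
    rw [hφ_zero _ (by linarith), hφ₁_zero _ (by linarith), hφ₂_zero _ (by linarith)]; ring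
  -- pointwise bounds
  have hgbd : ∀ t : ℝ, |g t| ≤ 1 := fun t => by
    rw [hgdef]; simp only [abs_mul]
    calc |φ (t/R)| * |Real.cos t| ≤ 1 * 1 :=
      mul_le_mul (hφ_le _) (Real.abs_cos_le_one t) (abs_nonneg _) zero_le_one
    _ = 1 := by ring
  have hhbd : ∀ t : ℝ, |h t| ≤ 1 := fun t => by
    rw [hhdef]; exact hφ_le _
  have hqbd : ∀ t : ℝ, |g2 t + g t| ≤ 3*C/R := fun t => by
    have hqe : g2 t + g t
        = φ₂ (t/R) * (1/R) * (1/R) * Real.cos t - 2*(φ₁ (t/R) * (1/R)) * Real.sin t := by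
      rw [hg2def, hgdef]; simp only; ring
    rw [hqe]
    have e1 : |φ₂ (t/R) * (1/R) * (1/R) * Real.cos t| ≤ C * (1/R) * (1/R) * 1 := by
      simp only [abs_mul]
      have hRinv : |1/R| = 1/R := abs_of_pos (by positivity)
      rw [hRinv]
      have h1R : (0:ℝ) ≤ 1/R := by positivity
      apply mul_le_mul _ (Real.abs_cos_le_one t) (abs_nonneg _) (by positivity)
      apply mul_le_mul _ le_rfl h1R (by positivity)
      exact mul_le_mul (hCφ₂ _) le_rfl h1R hCpos.le
    have e2 : |2*(φ₁ (t/R) * (1/R)) * Real.sin t| ≤ 2*(C*(1/R)) * 1 := by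
      simp only [abs_mul]
      have hRinv : |1/R| = 1/R := abs_of_pos (by positivity)
      rw [hRinv]
      have h1R : (0:ℝ) ≤ 1/R := by positivity
      apply mul_le_mul _ (Real.abs_sin_le_one t) (abs_nonneg _) (by positivity)
      rw [abs_two]
      apply mul_le_mul le_rfl (mul_le_mul (hCφ₁ _) le_rfl h1R hCpos.le) (by positivity)
        (by norm_num)
    calc |φ₂ (t/R) * (1/R) * (1/R) * Real.cos t - 2*(φ₁ (t/R) * (1/R)) * Real.sin t|
        ≤ |φ₂ (t/R) * (1/R) * (1/R) * Real.cos t| + |2*(φ₁ (t/R) * (1/R)) * Real.sin t| :=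
          abs_sub _ _
      _ ≤ C * (1/R) * (1/R) * 1 + 2*(C*(1/R)) * 1 := add_le_add e1 e2
      _ ≤ 3*C/R := by
          rw [le_div_iff₀ hRpos]
          have he : (C*(1/R)*(1/R)*1 + 2*(C*(1/R))*1)*R = C/R + 2*C := by
            field_simp
          rw [he]
          have hd : C/R ≤ C := by
            rw [div_le_iff₀ hRpos]; nlinarith
          linarith
  have hh2bd : ∀ t : ℝ, |h2 t| ≤ C/R := fun t => by
    rw [hh2def]; simp only [abs_mul]
    have hRinv : |1/R| = 1/R := abs_of_pos (by positivity)
    rw [hRinv]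
    have h1R : (0:ℝ) ≤ 1/R := by positivity
    calc |φ₂ (t/R)| * (1/R) * (1/R) ≤ C * (1/R) * (1/R) := by
          apply mul_le_mul _ le_rfl h1R (by positivity)
          exact mul_le_mul (hCφ₂ _) le_rfl h1R hCpos.le
      _ ≤ C/R := by
          rw [le_div_iff₀ hRpos]
          have he : C*(1/R)*(1/R)*R = C/R := by field_simp
          rw [he]
          rw [div_le_iff₀ hRpos]; nlinarith
  -- 1-D integrability
  have hintg2 : Integrable (fun t => (g t)^2) :=
    integrable_1d _ (hgsm.continuous.pow 2) (2*R) (fun t ht => by show (g t)^2 = 0; rw [hg0 t ht]; ring)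
  have hinth2 : Integrable (fun t => (h t)^2) :=
    integrable_1d _ (hhsm.continuous.pow 2) (2*R) (fun t ht => by show (h t)^2 = 0; rw [hh0 t ht]; ring)
  -- 1-D integral bounds
  have hIq : ∫ t, (g2 t + g t)^2 ≤ 2*(4*R)*(3*C/R)^2 :=
    int_sq_le _ (hg2cont.add hgsm.continuous) (4*R) (3*C/R) (by linarith) hq0 hqbd
  have hIh2 : ∫ t, (h2 t)^2 ≤ 2*(4*R)*(C/R)^2 :=
    int_sq_le _ hh2cont (4*R) (C/R) (by linarith) hh20 hh2bd
  have haU : ∫ t, (g t)^2 ≤ 4*R := by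
    have := int_sq_le _ hgsm.continuous (2*R) 1 (by linarith) hg0 hgbd
    calc ∫ t, (g t)^2 ≤ 2*(2*R)*1^2 := this
      _ = 4*R := by ring
  have hbU : ∫ t, (h t)^2 ≤ 4*R := by
    have := int_sq_le _ hhsm.continuous (2*R) 1 (by linarith) hh0 hhbd
    calc ∫ t, (h t)^2 ≤ 2*(2*R)*1^2 := this
      _ = 4*R := by ring
  have haL : R - 1 ≤ ∫ t, (g t)^2 := by
    have hseq : ∫ t in Set.Icc (-R) R, (g t)^2 = ∫ t in Set.Icc (-R) R, (Real.cos t)^2 := by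
      apply setIntegral_congr_fun measurableSet_Icc
      intro t ht
      simp only [Set.mem_Icc] at ht
      have habs : |t/R| ≤ 1 := by
        rw [abs_div, abs_of_pos hRpos, div_le_one hRpos]
        exact abs_le.2 ⟨ht.1, ht.2⟩
      rw [hgdef]; simp only; rw [hφ_one _ habs]; ring
    have hcos : ∫ t in Set.Icc (-R) R, (Real.cos t)^2
        = (Real.cos R * Real.sin R - Real.cos (-R) * Real.sin (-R) + R - (-R))/2 := by
      rw [integral_Icc_eq_integral_Ioc, ← intervalIntegral.integral_of_le (by linarith : -R ≤ R)]
      exact integral_cos_sq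
    have hle := setIntegral_le_integral (s := Set.Icc (-R) R) hintg2
      (Filter.Eventually.of_forall fun t => sq_nonneg (g t))
    rw [hseq, hcos, Real.cos_neg, Real.sin_neg] at hle
    have htrig : -1 ≤ Real.cos R * Real.sin R := by
      nlinarith [Real.cos_le_one R, Real.neg_one_le_cos R, Real.sin_le_one R,
        Real.neg_one_le_sin R]
    have : (Real.cos R * Real.sin R - Real.cos R * (-Real.sin R) + R - (-R))/2
        = Real.cos R * Real.sin R + R := by ring
    rw [this] at hle
    linarith
  have hbL : 2*R ≤ ∫ t, (h t)^2 := by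
    have hseq : ∫ t in Set.Icc (-R) R, (h t)^2 = ∫ t in Set.Icc (-R) R, (1:ℝ) := by
      apply setIntegral_congr_fun measurableSet_Icc
      intro t ht
      simp only [Set.mem_Icc] at ht
      have habs : |t/R| ≤ 1 := by
        rw [abs_div, abs_of_pos hRpos, div_le_one hRpos]
        exact abs_le.2 ⟨ht.1, ht.2⟩
      rw [hhdef]; simp only; rw [hφ_one _ habs]; norm_num
    have hone : ∫ t in Set.Icc (-R) R, (1:ℝ) = 2*R := by
      rw [setIntegral_const, smul_eq_mul, mul_one, measureReal_def, Real.volume_Icc,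
        ENNReal.toReal_ofReal (by linarith)]
      ring
    have hle := setIntegral_le_integral (s := Set.Icc (-R) R) hinth2
      (Filter.Eventually.of_forall fun t => sq_nonneg (h t))
    rw [hseq, hone] at hle
    exact hle
  -- the 2-D test function
  obtain ⟨v, hvdef⟩ : ∃ v : EuclideanSpace ℝ (Fin 2) → ℝ,
    v = fun y : E2 => g (y 0) * h (y 1) := ⟨_, rfl⟩
  have hcont0 : Continuous (fun y : E2 => y 0) :=
    (EuclideanSpace.proj (0:Fin 2) : E2 →L[ℝ] ℝ).continuous
  have hcont1 : Continuous (fun y : E2 => y 1) :=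
    (EuclideanSpace.proj (1:Fin 2) : E2 →L[ℝ] ℝ).continuous
  have hproj0sm : ContDiff ℝ (⊤:ℕ∞) (fun y : E2 => y 0) :=
    (EuclideanSpace.proj (0:Fin 2) : E2 →L[ℝ] ℝ).contDiff
  have hproj1sm : ContDiff ℝ (⊤:ℕ∞) (fun y : E2 => y 1) :=
    (EuclideanSpace.proj (1:Fin 2) : E2 →L[ℝ] ℝ).contDiff
  have hvsm : ContDiff ℝ (⊤:ℕ∞) v := by
    rw [hvdef]
    exact (hgsm.comp hproj0sm).mul (hhsm.comp hproj1sm)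
  have hvcs : HasCompactSupport v := by
    apply hcs_e2 v (2*R) (by linarith)
    intro x hx
    rcases hx with hx | hx
    · rw [hvdef]; simp only; rw [hg0 _ hx, zero_mul]
    · rw [hvdef]; simp only; rw [hh0 _ hx, mul_zero]
  have hlap : ∀ x : E2, laplacian v x = g2 (x 0) * h (x 1) + g (x 0) * h2 (x 1) := fun x => by
    rw [hvdef]
    exact laplacian_prod g h g1 h1 g2 h2 hdg hdh hdg1 hdh1 x
  have hsum : ∀ x : E2, v x + laplacian v x
      = (g2 (x 0) + g (x 0)) * h (x 1) + g (x 0) * h2 (x 1) := fun x => by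
    rw [hlap x, hvdef]; simp only; ring
  -- integrability on the plane
  have hprodint : ∀ f₁ f₂ : ℝ → ℝ, Continuous f₁ → Continuous f₂ →
      (∀ t : ℝ, 4*R ≤ |t| → f₁ t = 0) → (∀ t : ℝ, 4*R ≤ |t| → f₂ t = 0) →
      Integrable (fun x : E2 => f₁ (x 0) * f₂ (x 1)) := by
    intro f₁ f₂ hc1 hc2 hv1 hv2
    refine Continuous.integrable_of_hasCompactSupport
      ((hc1.comp hcont0).mul (hc2.comp hcont1)) ?_
    apply hcs_e2 _ (4*R) (by linarith)
    intro x hx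
    rcases hx with hx | hx
    · rw [hv1 _ hx, zero_mul]
    · rw [hv2 _ hx, mul_zero]
  have hint_qh : Integrable (fun x : E2 => (g2 (x 0) + g (x 0))^2 * (h (x 1))^2) :=
    hprodint (fun t => (g2 t + g t)^2) (fun t => (h t)^2)
      ((hg2cont.add hgsm.continuous).pow 2) (hhsm.continuous.pow 2)
      (fun t ht => by show (g2 t + g t)^2 = 0; rw [hq0 t ht]; ring)
      (fun t ht => by show (h t)^2 = 0; rw [hh0 t (le_trans (by linarith) ht)]; ring)
  have hint_gh2 : Integrable (fun x : E2 => (g (x 0))^2 * (h2 (x 1))^2) :=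
    hprodint (fun t => (g t)^2) (fun t => (h2 t)^2)
      (hgsm.continuous.pow 2) (hh2cont.pow 2)
      (fun t ht => by show (g t)^2 = 0; rw [hg0 t (le_trans (by linarith) ht)]; ring)
      (fun t ht => by show (h2 t)^2 = 0; rw [hh20 t ht]; ring)
  have hint_v2 : Integrable (fun x : E2 => (v x)^2) := by
    have heq : (fun x : E2 => (v x)^2) = fun x : E2 => (g (x 0))^2 * (h (x 1))^2 := by
      funext x; rw [hvdef]; simp only; ring
    rw [heq]
    exact hprodint (fun t => (g t)^2) (fun t => (h t)^2)
      (hgsm.continuous.pow 2) (hhsm.continuous.pow 2)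
      (fun t ht => by show (g t)^2 = 0; rw [hg0 t (le_trans (by linarith) ht)]; ring)
      (fun t ht => by show (h t)^2 = 0; rw [hh0 t (le_trans (by linarith) ht)]; ring)
  have hint_sum : Integrable (fun x : E2 => (v x + laplacian v x)^2) := by
    have heq : (fun x : E2 => (v x + laplacian v x)^2)
        = fun x : E2 => ((g2 (x 0) + g (x 0)) * h (x 1) + g (x 0) * h2 (x 1))^2 :=
      funext fun x => by rw [hsum x]
    rw [heq]
    apply Continuous.integrable_of_hasCompactSupport
    · exact ((((hg2cont.comp hcont0).add (hgsm.continuous.comp hcont0)).mul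
        (hhsm.continuous.comp hcont1)).add
        ((hgsm.continuous.comp hcont0).mul (hh2cont.comp hcont1))).pow 2
    · apply hcs_e2 _ (4*R) (by linarith)
      intro x hx
      rcases hx with hx | hx
      · rw [hq0 _ hx, hg0 _ (le_trans (by linarith) hx)]; ring
      · rw [hh0 _ (le_trans (by linarith) hx), hh20 _ hx]; ring
  -- the comparison
  have hJle : (∫ x : E2, (v x + laplacian v x)^2)
      ≤ 2*(∫ t, (g2 t + g t)^2)*(∫ t, (h t)^2) + 2*(∫ t, (g t)^2)*(∫ t, (h2 t)^2) := by
    have step1 : (∫ x : E2, (v x + laplacian v x)^2)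
        ≤ ∫ x : E2, (2*((g2 (x 0) + g (x 0))^2 * (h (x 1))^2)
            + 2*((g (x 0))^2 * (h2 (x 1))^2)) := by
      apply integral_mono hint_sum ((hint_qh.const_mul 2).add (hint_gh2.const_mul 2))
      intro x
      simp only [Pi.add_apply]
      rw [hsum x]
      nlinarith [sq_nonneg ((g2 (x 0) + g (x 0)) * h (x 1) - g (x 0) * h2 (x 1))]
    have step2 : (∫ x : E2, (2*((g2 (x 0) + g (x 0))^2 * (h (x 1))^2)
            + 2*((g (x 0))^2 * (h2 (x 1))^2)))
        = 2*(∫ t, (g2 t + g t)^2)*(∫ t, (h t)^2) + 2*(∫ t, (g t)^2)*(∫ t, (h2 t)^2) := by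
      rw [integral_add (hint_qh.const_mul 2) (hint_gh2.const_mul 2),
        integral_const_mul, integral_const_mul]
      have e1 : ∫ x : E2, (g2 (x 0) + g (x 0))^2 * (h (x 1))^2
          = (∫ t, (g2 t + g t)^2) * ∫ t, (h t)^2 :=
        integral_prod_e2 (fun t => (g2 t + g t)^2) (fun t => (h t)^2)
      have e2 : ∫ x : E2, (g (x 0))^2 * (h2 (x 1))^2
          = (∫ t, (g t)^2) * ∫ t, (h2 t)^2 :=
        integral_prod_e2 (fun t => (g t)^2) (fun t => (h2 t)^2)
      rw [e1, e2]; ring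
    exact step1.trans_eq step2
  have hIv2 : (∫ x : E2, (v x)^2) = (∫ t, (g t)^2) * ∫ t, (h t)^2 := by
    have heq : (fun x : E2 => (v x)^2) = fun x : E2 => (g (x 0))^2 * (h (x 1))^2 := by
      funext x; rw [hvdef]; simp only; ring
    rw [heq]
    exact integral_prod_e2 (fun t => (g t)^2) (fun t => (h t)^2)
  -- the quantitative spectral inequality
  have hIqnn : 0 ≤ ∫ t, (g2 t + g t)^2 := integral_nonneg fun t => sq_nonneg _
  have hIh2nn : 0 ≤ ∫ t, (h2 t)^2 := integral_nonneg fun t => sq_nonneg _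
  have hann : 0 ≤ ∫ t, (g t)^2 := integral_nonneg fun t => sq_nonneg _
  have hbnn : 0 ≤ ∫ t, (h t)^2 := integral_nonneg fun t => sq_nonneg _
  have hIqv : R * (∫ t, (g2 t + g t)^2) ≤ 72*C^2 := by
    have hcomp : 2*(4*R)*(3*C/R)^2 = 72*C^2/R := by field_simp; ring
    rw [hcomp] at hIq
    calc R * (∫ t, (g2 t + g t)^2) ≤ R * (72*C^2/R) :=
        mul_le_mul_of_nonneg_left hIq hRpos.le
      _ = 72*C^2 := by field_simp
  have hIh2v : R * (∫ t, (h2 t)^2) ≤ 8*C^2 := by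
    have hcomp : 2*(4*R)*(C/R)^2 = 8*C^2/R := by field_simp; ring
    rw [hcomp] at hIh2
    calc R * (∫ t, (h2 t)^2) ≤ R * (8*C^2/R) :=
        mul_le_mul_of_nonneg_left hIh2 hRpos.le
      _ = 8*C^2 := by field_simp
  have hquant : (∫ x : E2, (v x + laplacian v x)^2) < μ * ∫ x : E2, (v x)^2 := by
    rw [hIv2]
    have hRJ : R * (∫ x : E2, (v x + laplacian v x)^2) ≤ 640 * C^2 * R := by
      calc R * (∫ x : E2, (v x + laplacian v x)^2)
          ≤ R * (2*(∫ t, (g2 t + g t)^2)*(∫ t, (h t)^2)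
              + 2*(∫ t, (g t)^2)*(∫ t, (h2 t)^2)) :=
            mul_le_mul_of_nonneg_left hJle hRpos.le
        _ = 2*((R*(∫ t, (g2 t + g t)^2))*(∫ t, (h t)^2))
              + 2*((∫ t, (g t)^2)*(R*(∫ t, (h2 t)^2))) := by ring
        _ ≤ 2*((72*C^2)*(4*R)) + 2*((4*R)*(8*C^2)) := by
            have m1 : (R*(∫ t, (g2 t + g t)^2))*(∫ t, (h t)^2) ≤ (72*C^2)*(4*R) :=
              mul_le_mul hIqv hbU hbnn (by positivity)
            have m2 : (∫ t, (g t)^2)*(R*(∫ t, (h2 t)^2)) ≤ (4*R)*(8*C^2) :=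
              mul_le_mul haU hIh2v (mul_nonneg hRpos.le hIh2nn) (by linarith)
            linarith
        _ = 640*C^2*R := by ring
    have hlow : 864 * C^2 * R ≤ R * (μ * ((∫ t, (g t)^2) * ∫ t, (h t)^2)) := by
      have hab : (R-1)*(2*R) ≤ (∫ t, (g t)^2) * ∫ t, (h t)^2 :=
        mul_le_mul haL hbL (by linarith) hann
      have h1 : μ * ((R-1)*(2*R)) ≤ μ * ((∫ t, (g t)^2) * ∫ t, (h t)^2) :=
        mul_le_mul_of_nonneg_left hab hμ.le
      have h2 : R * (μ * ((R-1)*(2*R))) ≤ R * (μ * ((∫ t, (g t)^2) * ∫ t, (h t)^2)) :=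
        mul_le_mul_of_nonneg_left h1 hRpos.le
      have k1 : 432*C^2*((R-1)*(2*R)) ≤ μ*R*((R-1)*(2*R)) :=
        mul_le_mul_of_nonneg_right hμR (by nlinarith)
      have k2 : 864*C^2*R ≤ 432*C^2*((R-1)*(2*R)) := by
        nlinarith [mul_nonneg (mul_nonneg (sq_nonneg C) hRpos.le)
          (by linarith : (0:ℝ) ≤ R - 2)]
      have e3 : R * (μ * ((R-1)*(2*R))) = μ*R*((R-1)*(2*R)) := by ring
      linarith [e3 ▸ h2]
    have hmid : 640*C^2*R < 864*C^2*R := by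
      have : (0:ℝ) < C^2*R := mul_pos (pow_pos hCpos 2) hRpos
      nlinarith
    have hfin : R * (∫ x : E2, (v x + laplacian v x)^2)
        < R * (μ * ((∫ t, (g t)^2) * ∫ t, (h t)^2)) := by linarith
    exact lt_of_mul_lt_mul_left hfin hRpos.le
  refine ⟨v, hvsm, hvcs, hquant, ?_⟩
  intro β
  -- derivative of v
  have hVd : ∀ x : E2, HasFDerivAt v
      ((g1 (x 0) * h (x 1)) • (EuclideanSpace.proj 0 : E2 →L[ℝ] ℝ)
        + (g (x 0) * h1 (x 1)) • (EuclideanSpace.proj 1 : E2 →L[ℝ] ℝ)) x := fun x => by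
    rw [hvdef]; exact hasFDerivAt_prod g h g1 h1 hdg hdh x
  have hvdiff : Differentiable ℝ v := fun x => (hVd x).differentiableAt
  have hfd : ∀ x : E2, fderiv ℝ v x
      = (g1 (x 0) * h (x 1)) • (EuclideanSpace.proj 0 : E2 →L[ℝ] ℝ)
        + (g (x 0) * h1 (x 1)) • (EuclideanSpace.proj 1 : E2 →L[ℝ] ℝ) := fun x => (hVd x).fderiv
  -- integrability of the remaining pieces of the energy
  have hint_K : Integrable (fun x : E2 => v x * ‖fderiv ℝ v x‖^2) := by
    have heq : (fun x : E2 => v x * ‖fderiv ℝ v x‖^2)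
        = fun x : E2 => v x * ‖(g1 (x 0) * h (x 1)) • (EuclideanSpace.proj 0 : E2 →L[ℝ] ℝ)
            + (g (x 0) * h1 (x 1)) • (EuclideanSpace.proj 1 : E2 →L[ℝ] ℝ)‖^2 := by
      funext x; rw [hfd x]
    rw [heq]
    apply Continuous.integrable_of_hasCompactSupport
    · apply Continuous.mul
      · rw [hvdef]; exact (hgsm.continuous.comp hcont0).mul (hhsm.continuous.comp hcont1)
      · apply Continuous.pow
        apply Continuous.norm
        exact ((((hg1cont.comp hcont0).mul (hhsm.continuous.comp hcont1)).smul
          continuous_const).add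
          (((hgsm.continuous.comp hcont0).mul (hh1cont.comp hcont1)).smul continuous_const))
    · apply hcs_e2 _ (2*R) (by linarith)
      intro x hx
      rcases hx with hx | hx
      · rw [hvdef]; simp only; rw [hg0 _ hx]; ring
      · rw [hvdef]; simp only; rw [hh0 _ hx]; ring
  have hint_L : Integrable (fun x : E2 => (v x)^4) := by
    have heq : (fun x : E2 => (v x)^4)
        = fun x : E2 => (fun t => (g t)^4) (x 0) * (fun t => (h t)^4) (x 1) := by
      funext x; rw [hvdef]; simp only; ring
    rw [heq]
    exact hprodint _ _ (hgsm.continuous.pow 4) (hhsm.continuous.pow 4)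
      (fun t ht => by show (g t)^4 = 0; rw [hg0 t (le_trans (by linarith) ht)]; ring)
      (fun t ht => by show (h t)^4 = 0; rw [hh0 t (le_trans (by linarith) ht)]; ring)
  -- scaling identities
  have hlaps : ∀ (ε : ℝ) (x : E2), laplacian (ε • v) x = ε * laplacian v x := by
    intro ε x
    have heq : (ε • v) = fun y : E2 => (fun t => ε * g t) (y 0) * h (y 1) := by
      funext y; simp only [hvdef, Pi.smul_apply, smul_eq_mul]; ring
    rw [heq, laplacian_prod (fun t => ε * g t) h (fun t => ε * g1 t) h1
      (fun t => ε * g2 t) h2 (fun t => (hdg t).const_mul ε) hdh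
      (fun t => (hdg1 t).const_mul ε) hdh1 x, hlap x]
    ring
  have hfds : ∀ (ε : ℝ) (x : E2), fderiv ℝ (ε • v) x = ε • fderiv ℝ v x := fun ε x =>
    fderiv_const_smul (hvdiff x) ε
  have hgrad : ∀ (ε : ℝ) (x : E2), ‖gradient (ε • v) x‖^2 = ε^2 * ‖fderiv ℝ v x‖^2 := by
    intro ε x
    have h0 : ‖gradient (ε • v) x‖ = ‖fderiv ℝ (ε • v) x‖ := by
      rw [show gradient (ε • v) x
        = (InnerProductSpace.toDual ℝ _).symm (fderiv ℝ (ε • v) x) from rfl]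
      exact LinearIsometryEquiv.norm_map _ _
    rw [h0, hfds ε x, norm_smul, Real.norm_eq_abs, mul_pow, sq_abs]
  -- expansion of the energy along the ray
  have hE : ∀ ε : ℝ, freeEnergy μ β (ε • v)
      = -(μ/2)*ε^2*((∫ t, (g t)^2) * ∫ t, (h t)^2)
        + (1/2)*ε^2*(∫ x : E2, (v x + laplacian v x)^2)
        + (β/3)*ε^3*(∫ x : E2, v x * ‖fderiv ℝ v x‖^2)
        + (1/4)*ε^4*(∫ x : E2, (v x)^4) := by
    intro ε
    rw [freeEnergy]
    have hi1 : Integrable (fun x : E2 => (-(μ/2)*ε^2) * (v x)^2) := hint_v2.const_mul _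
    have hi2 : Integrable (fun x : E2 => ((1/2)*ε^2) * (v x + laplacian v x)^2) :=
      hint_sum.const_mul _
    have hi3 : Integrable (fun x : E2 => ((β/3)*ε^3) * (v x * ‖fderiv ℝ v x‖^2)) :=
      hint_K.const_mul _
    have hi4 : Integrable (fun x : E2 => ((1/4)*ε^4) * (v x)^4) := hint_L.const_mul _
    have heq : (fun x : E2 => -(μ / 2) * (ε • v) x ^ 2
          + 1 / 2 * ((ε • v) x + laplacian (ε • v) x) ^ 2
          + β / 3 * (ε • v) x * ‖gradient (ε • v) x‖ ^ 2 + 1 / 4 * (ε • v) x ^ 4)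
        = fun x : E2 => (-(μ/2)*ε^2) * (v x)^2 + ((1/2)*ε^2) * (v x + laplacian v x)^2
            + ((β/3)*ε^3) * (v x * ‖fderiv ℝ v x‖^2) + ((1/4)*ε^4) * (v x)^4 := by
      funext x
      rw [hlaps ε x, hgrad ε x]
      simp only [Pi.smul_apply, smul_eq_mul]
      ring
    have h12 : Integrable (fun x : E2 => (-(μ/2)*ε^2) * (v x)^2
        + ((1/2)*ε^2) * (v x + laplacian v x)^2) := hi1.add hi2
    have h123 : Integrable (fun x : E2 => (-(μ/2)*ε^2) * (v x)^2
        + ((1/2)*ε^2) * (v x + laplacian v x)^2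
        + ((β/3)*ε^3) * (v x * ‖fderiv ℝ v x‖^2)) := h12.add hi3
    rw [heq, integral_add h123 hi4, integral_add h12 hi3,
      integral_add hi1 hi2, integral_const_mul, integral_const_mul, integral_const_mul,
      integral_const_mul, hIv2]
  -- choice of ε₀
  obtain ⟨K, hKdef⟩ : ∃ K : ℝ,
    K = (β/3)*(∫ x : E2, v x * ‖fderiv ℝ v x‖^2) := ⟨_, rfl⟩
  obtain ⟨L, hLdef⟩ : ∃ L : ℝ, L = (1/4)*(∫ x : E2, (v x)^4) := ⟨_, rfl⟩
  obtain ⟨D, hDdef⟩ : ∃ D : ℝ, D = μ*((∫ t, (g t)^2) * ∫ t, (h t)^2)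
    - (∫ x : E2, (v x + laplacian v x)^2) := ⟨_, rfl⟩
  have hDpos : 0 < D := by
    rw [hDdef]
    rw [hIv2] at hquant
    linarith
  refine ⟨min 1 (D / (2*(|K| + |L| + 1))), ?_, ?_⟩
  · apply lt_min one_pos
    apply div_pos hDpos
    positivity
  · intro ε hε hεlt
    constructor
    · have hden : 0 < 2*(|K| + |L| + 1) := by positivity
      have hε1 : ε < 1 := lt_of_lt_of_le hεlt (min_le_left _ _)
      have hε2 : ε * (2*(|K| + |L| + 1)) < D :=
        (lt_div_iff₀ hden).mp (lt_of_lt_of_le hεlt (min_le_right _ _))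
      rw [hE ε]
      have hexp : -(μ/2)*ε^2*((∫ t, (g t)^2) * ∫ t, (h t)^2)
            + (1/2)*ε^2*(∫ x : E2, (v x + laplacian v x)^2)
            + (β/3)*ε^3*(∫ x : E2, v x * ‖fderiv ℝ v x‖^2)
            + (1/4)*ε^4*(∫ x : E2, (v x)^4)
          = -(D/2)*ε^2 + K*ε^3 + L*ε^4 := by
        rw [hDdef, hKdef, hLdef]; ring
      rw [hexp]
      have hstep : K*ε + L*ε^2 < D/2 := by
        have b1 : K*ε ≤ |K| * ε := mul_le_mul_of_nonneg_right (le_abs_self K) hε.le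
        have b2 : L*ε^2 ≤ |L| * ε := by
          calc L*ε^2 ≤ |L| * ε^2 := mul_le_mul_of_nonneg_right (le_abs_self L) (sq_nonneg ε)
            _ ≤ |L| * ε := by
                nlinarith [mul_nonneg (mul_nonneg (abs_nonneg L) hε.le)
                  (by linarith : (0:ℝ) ≤ 1 - ε)]
        nlinarith [abs_nonneg K, abs_nonneg L]
      nlinarith [mul_lt_mul_of_pos_right hstep (mul_pos hε hε)]
    · have hlap0 : ∀ x : E2, laplacian (0 : E2 → ℝ) x = 0 := by
        intro x
        have heq : (0 : E2 → ℝ)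
            = fun y : E2 => (fun _ : ℝ => (0:ℝ)) (y 0) * (fun _ : ℝ => (0:ℝ)) (y 1) := by
          funext y; simp
        rw [heq, laplacian_prod (fun _ => (0:ℝ)) (fun _ => (0:ℝ)) (fun _ => (0:ℝ))
          (fun _ => (0:ℝ)) (fun _ => (0:ℝ)) (fun _ => (0:ℝ))
          (fun t => hasDerivAt_const t 0) (fun t => hasDerivAt_const t 0)
          (fun t => hasDerivAt_const t 0) (fun t => hasDerivAt_const t 0) x]
        simp
      rw [freeEnergy]
      simp [hlap0]
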